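/- Let n and d be positive integers and let V be a subspace of F_2^n of dimension d such that every nonzero v ∈ V has Hamming weight |v| ≥ n^{8/15}. Then V has a basis v_1,…,v_d such that for every i ∈ {1,…,d}, the set I_i = {k ∈ [n] : v_i(k) = 1 and v_j(k) = 0 for all j ≠ i} has size at least n^{8/15}/2^{d−1}. -/

import Mathlib

open Finset

theorem stmt18 (n d : ℕ) (hn : 0 < n) (hd : 0 < d)
    (V : Submodule (ZMod 2) (Fin n → ZMod 2))
    (hdim : Module.finrank (ZMod 2) V = d)
    (hwt : ∀ v : Fin n → ZMod 2, v ∈ V → v ≠ 0 →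
      (n : ℝ) ^ ((8 : ℝ) / 15) ≤ (hammingNorm v : ℝ)) :
    ∃ b : Module.Basis (Fin d) (ZMod 2) V,
      ∀ i : Fin d,
        (n : ℝ) ^ ((8 : ℝ) / 15) / 2 ^ (d - 1) ≤
          ((Finset.univ.filter (fun k : Fin n =>
            ((b i : Fin n → ZMod 2) k = 1 ∧
              ∀ j : Fin d, j ≠ i → (b j : Fin n → ZMod 2) k = 0))).card : ℝ) := by
  classical
  set N : ℝ := (n : ℝ) ^ ((8 : ℝ) / 15) with hNdef
  have hNpos : 0 < N := Real.rpow_pos_of_pos (by exact_mod_cast hn) _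
  have hBpos : 0 < N / 2 ^ (d - 1) := by positivity
  haveI : FiniteDimensional (ZMod 2) V := inferInstance
  let b0 : Module.Basis (Fin d) (ZMod 2) V := Module.finBasisOfFinrankEq (ZMod 2) V hdim
  let φ : Fin n → (Fin d → ZMod 2) := fun k j => (b0 j : Fin n → ZMod 2) k
  let fib : (Fin d → ZMod 2) → Finset (Fin n) := fun c => univ.filter (fun k => φ k = c)
  have hfib : ∀ c, fib c = univ.filter (fun k => φ k = c) := fun _ => rfl
  let Heavy : Set (Fin d → ZMod 2) := {c | N / 2 ^ (d - 1) ≤ ((fib c).card : ℝ)}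
  have hHeavy : Heavy = {c | N / 2 ^ (d - 1) ≤ ((fib c).card : ℝ)} := rfl
  have hsingle : ∀ x : Fin d → ZMod 2, x = ∑ j, x j • Pi.single j 1 := by
    intro x; simp [← Pi.single_smul, Finset.univ_sum_single]
  -- every nonzero e in F_2^d gives a nonzero vector of V with coords ⟨e, φ k⟩
  have hvec : ∀ e : Fin d → ZMod 2, e ≠ 0 →
      ∃ v : Fin n → ZMod 2, v ∈ V ∧ v ≠ 0 ∧ ∀ k, v k = ∑ j, e j * φ k j := by
    intro e he
    refine ⟨((∑ j, e j • b0 j : V) : Fin n → ZMod 2), (∑ j, e j • b0 j : V).2, ?_, ?_⟩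
    · intro h0
      have : (∑ j, e j • b0 j : V) = 0 := Subtype.ext h0
      have he' := Fintype.linearIndependent_iff.mp b0.linearIndependent e this
      exact he (funext he')
    · intro k
      push_cast
      simp [φ, Finset.sum_apply]
  -- heavy patterns span
  have hspan : Submodule.span (ZMod 2) Heavy = ⊤ := by
    by_contra hne
    have hlt : Submodule.span (ZMod 2) Heavy < ⊤ := lt_top_iff_ne_top.mpr hne
    obtain ⟨f, hf0, hfmap⟩ := Submodule.exists_dual_map_eq_bot_of_lt_top hlt inferInstance
    have hker : ∀ c ∈ Heavy, f c = 0 := by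
      intro c hc
      have h1 : f c ∈ Submodule.map f (Submodule.span (ZMod 2) Heavy) :=
        Submodule.mem_map_of_mem (Submodule.subset_span hc)
      rw [hfmap] at h1; exact (Submodule.mem_bot _).mp h1
    set e : Fin d → ZMod 2 := fun j => f (Pi.single j 1) with hedef
    have hfe : ∀ x, f x = ∑ j, e j * x j := by
      intro x
      conv_lhs => rw [hsingle x]
      rw [map_sum]
      exact Finset.sum_congr rfl fun j _ => by rw [map_smul, smul_eq_mul, mul_comm]
    have he0 : e ≠ 0 := by
      intro h
      apply hf0
      apply LinearMap.ext
      intro x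
      rw [hfe x, h]
      simp
    obtain ⟨v, hvV, hv0, hvk⟩ := hvec e he0
    have hvN : N ≤ (hammingNorm v : ℝ) := hwt v hvV hv0
    have hvk' : ∀ k, v k = f (φ k) := fun k => by rw [hvk k, ← hfe]
    have hZ : ∀ a : ZMod 2, a ≠ 0 ↔ a = 1 := by decide
    set S : Finset (Fin d → ZMod 2) := univ.filter (fun c => f c = 1) with hS
    have hSlight : ∀ c ∈ S, ((fib c).card : ℝ) < N / 2 ^ (d - 1) := by
      intro c hc
      by_contra hge
      have h1 : c ∈ Heavy := by rw [hHeavy]; exact not_lt.mp hge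
      have h2 := hker c h1
      have h3 : f c = 1 := (mem_filter.mp hc).2
      rw [h2] at h3
      exact absurd h3 (by decide)
    have hSne : S.Nonempty := by
      obtain ⟨x, hx⟩ : ∃ x, f x ≠ 0 := by
        by_contra h
        push_neg at h
        exact hf0 (LinearMap.ext fun x => h x)
      exact ⟨x, mem_filter.mpr ⟨mem_univ _, (hZ _).mp hx⟩⟩
    have hScard : S.card ≤ 2 ^ (d - 1) := by
      obtain ⟨c0, hc0⟩ := hSne
      have hc0' : f c0 = 1 := (mem_filter.mp hc0).2
      set T : Finset (Fin d → ZMod 2) := univ.filter (fun c => ¬ f c = 1) with hT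
      have hST : S.card ≤ T.card := by
        apply Finset.card_le_card_of_injOn (fun c => c + c0)
        · intro c hc
          have : f c = 1 := (mem_filter.mp hc).2
          refine mem_filter.mpr ⟨mem_univ _, ?_⟩
          rw [map_add, this, hc0']
          decide
        · intro x _ y _ hxy
          exact add_right_cancel hxy
      have htot : S.card + T.card = 2 ^ d := by
        rw [hS, hT, Finset.card_filter_add_card_filter_not]
        simp [Fintype.card_fun]
      have h2d : 2 ^ d = 2 ^ (d - 1) + 2 ^ (d - 1) := by
        rw [← two_mul, ← pow_succ']
        congr 1
        omega
      omega
    have hmem : ∀ k ∈ univ.filter (fun k => v k ≠ 0), φ k ∈ S := by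
      intro k hk
      have h1 : v k ≠ 0 := (mem_filter.mp hk).2
      rw [hvk'] at h1
      exact mem_filter.mpr ⟨mem_univ _, (hZ _).mp h1⟩
    have hcount : hammingNorm v =
        ∑ c ∈ S, ((univ.filter (fun k => v k ≠ 0)).filter (fun k => φ k = c)).card := by
      rw [hammingNorm]
      exact Finset.card_eq_sum_card_fiberwise hmem
    have hlt' : (hammingNorm v : ℝ) < N := by
      rw [hcount]
      push_cast
      have h1 : ∑ c ∈ S,
          ((((univ.filter (fun k => v k ≠ 0)).filter (fun k => φ k = c)).card : ℝ))
          < ∑ c ∈ S, N / 2 ^ (d - 1) := by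
        apply Finset.sum_lt_sum_of_nonempty hSne
        intro c hc
        refine lt_of_le_of_lt ?_ (hSlight c hc)
        have : ((univ.filter (fun k => v k ≠ 0)).filter (fun k => φ k = c)) ⊆ fib c := by
          rw [hfib]
          intro k hk
          exact mem_filter.mpr ⟨mem_univ _, (mem_filter.mp hk).2⟩
        exact_mod_cast Finset.card_le_card this
      refine lt_of_lt_of_le h1 ?_
      rw [Finset.sum_const, nsmul_eq_mul]
      calc (S.card : ℝ) * (N / 2 ^ (d - 1)) ≤ 2 ^ (d - 1) * (N / 2 ^ (d - 1)) := by
            apply mul_le_mul_of_nonneg_right _ (le_of_lt hBpos)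
            exact_mod_cast hScard
        _ = N := by field_simp
    exact absurd hvN (not_le.mpr hlt')
  -- extract a basis of heavy patterns
  obtain ⟨cB, hcB⟩ : ∃ cB : Module.Basis (Fin d) (ZMod 2) (Fin d → ZMod 2),
      ∀ i, (cB i) ∈ Heavy := by
    obtain ⟨t, hts, htspan, htind⟩ := exists_linearIndependent (ZMod 2) Heavy
    haveI : Fintype t := Fintype.ofFinite t
    let tB : Module.Basis t (ZMod 2) (Fin d → ZMod 2) :=
      Module.Basis.mk htind (by rw [Subtype.range_coe, htspan, hspan])
    have hcard : Fintype.card t = d := by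
      rw [← Module.finrank_eq_card_basis tB]; simp
    let eqv : Fin d ≃ t := (Fintype.equivFinOfCardEq hcard).symm
    refine ⟨tB.reindex eqv.symm, fun i => ?_⟩
    rw [Module.Basis.reindex_apply]
    have : tB (eqv.symm.symm i) = ((eqv.symm.symm i : t) : Fin d → ZMod 2) := by
      simp [tB, Module.Basis.mk_apply]
    rw [this]
    exact hts (eqv.symm.symm i).2
  -- each heavy fiber is nonempty
  have hfibne : ∀ i : Fin d, ∃ k : Fin n, φ k = cB i := by
    intro i
    have h1 : (0 : ℝ) < ((fib (cB i)).card : ℝ) := lt_of_lt_of_le hBpos (hcB i)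
    have h2 : (fib (cB i)).Nonempty := Finset.card_pos.mp (by exact_mod_cast h1)
    obtain ⟨k, hk⟩ := h2
    exact ⟨k, (Finset.mem_filter.mp hk).2⟩
  -- the new basis vectors
  let a : Fin d → Fin d → ZMod 2 := fun i j => cB.repr (Pi.single j 1) i
  have ha : ∀ (x : Fin d → ZMod 2) (i : Fin d), ∑ j, a i j * x j = cB.repr x i := by
    intro x i
    conv_rhs => rw [hsingle x]
    simp only [map_sum, map_smul, Finsupp.coe_smul, Finsupp.coe_finset_sum, Finset.sum_apply,
      Pi.smul_apply, smul_eq_mul]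
    exact Finset.sum_congr rfl fun j _ => mul_comm _ _
  let w : Fin d → V := fun i => ∑ j, a i j • b0 j
  have hw : ∀ (i : Fin d) (k : Fin n), (w i : Fin n → ZMod 2) k = cB.repr (φ k) i := by
    intro i k
    have : (w i : Fin n → ZMod 2) k = ∑ j, a i j * φ k j := by
      simp [w, φ, Finset.sum_apply]
    rw [this, ha]
  have hwind : LinearIndependent (ZMod 2) w := by
    rw [Fintype.linearIndependent_iff]
    intro g hg m
    obtain ⟨k, hk⟩ := hfibne m
    have h0 : ((∑ i, g i • w i : V) : Fin n → ZMod 2) k = 0 := by rw [hg]; rfl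
    have h1 : ∑ i, g i * cB.repr (φ k) i = 0 := by
      rw [← h0]
      push_cast
      simp [Finset.sum_apply, hw]
    rw [hk] at h1
    simpa [Module.Basis.repr_self, Finsupp.single_apply, mul_comm] using h1
  haveI : Nonempty (Fin d) := ⟨⟨0, hd⟩⟩
  let b : Module.Basis (Fin d) (ZMod 2) V :=
    basisOfLinearIndependentOfCardEqFinrank hwind (by simp [hdim])
  have hb : ∀ i, b i = w i := by
    intro i; rw [coe_basisOfLinearIndependentOfCardEqFinrank]
  refine ⟨b, fun i => ?_⟩
  have hsub : fib (cB i) ⊆ Finset.univ.filter (fun k : Fin n =>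
      ((b i : Fin n → ZMod 2) k = 1 ∧
        ∀ j : Fin d, j ≠ i → (b j : Fin n → ZMod 2) k = 0)) := by
    intro k hk
    have hφk : φ k = cB i := (Finset.mem_filter.mp hk).2
    have hval : ∀ j, (b j : Fin n → ZMod 2) k = if i = j then 1 else 0 := by
      intro j
      rw [hb, hw, hφk, Module.Basis.repr_self, Finsupp.single_apply]
    refine Finset.mem_filter.mpr ⟨Finset.mem_univ _, by simp [hval], fun j hj => ?_⟩
    rw [hval j, if_neg (fun h => hj h.symm)]
  calc N / 2 ^ (d - 1) ≤ ((fib (cB i)).card : ℝ) := hcB i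
    _ ≤ _ := by exact_mod_cast Finset.card_le_card hsub
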